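/- arXiv:1511.03132 — 2 statements merged into one kernel-verified Lean document; each statement's English description precedes it below -/
import Mathlib

section
/- Let g' be an (n+1)-dimensional Lie algebra of Vergne type over F with Vergne basis e_1,…,e_{n+1}, and let g = g'/span(e_{n+1}), identified with span(e_1,…,e_n); then g is a Lie algebra of Vergne type and there exists a Chevalley–Eilenberg 2-cocycle ω of g, homogeneous of degree n+1 with nonzero e^1∧e^n component, such that g' is isomorphic to the central extension g(ω). -/
/-!
STATEMENT 8: Let g' be an (n+1)-dimensional Lie algebra of Vergne type over a field F
of characteristic two, with Vergne basis e_1,…,e_{n+1}, and let g = g'/span(e_{n+1})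
(identified with span(e_1,…,e_n), i.e. realized as any Lie algebra quotient of g' by
the central ideal span(e_{n+1})).  Then g is a Lie algebra of Vergne type (with basis
the images of e_1,…,e_n) and there exists a Chevalley–Eilenberg 2-cocycle ω of g,
homogeneous of degree n+1 with nonzero e^1∧e^n component, such that g' is the
central extension g(ω): the e_{n+1}-coordinate of ⁅e_i, e_j⁆ in g' is ω(ē_i, ē_j).
-/

noncomputable section
namespace Char2Filiform

/-- `b` is a Vergne basis of `g` with structure constants `c` (paper-indexed:
`c i j` is `c_{i,j}`):  `[e_1, e_i] = e_{i+1}` for `2 ≤ i ≤ n-1`, `[e_1, e_n] = 0`,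
`[e_i, e_j] = c_{i,j} e_{i+j}` for `i, j ≥ 2` with `i + j ≤ n`, and
`[e_i, e_j] = 0` for `i, j ≥ 2` with `i + j > n`.
(`b ⟨m, _⟩` is the paper's `e_{m+1}`.) -/
def VergneRel (F : Type*) [Field F] (n : ℕ) (g : Type*) [LieRing g] [LieAlgebra F g]
    (b : Module.Basis (Fin n) F g) (c : ℕ → ℕ → F) : Prop :=
  (∀ m : ℕ, (h : m + 3 ≤ n) →
      ⁅b ⟨0, by omega⟩, b ⟨m + 1, by omega⟩⁆ = b ⟨m + 2, by omega⟩) ∧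
  (∀ (h : 2 ≤ n), ⁅b ⟨0, by omega⟩, b ⟨n - 1, by omega⟩⁆ = 0) ∧
  (∀ p q : ℕ, (h : p + q + 4 ≤ n) →
      ⁅b ⟨p + 1, by omega⟩, b ⟨q + 1, by omega⟩⁆ =
        c (p + 2) (q + 2) • b ⟨p + q + 3, by omega⟩) ∧
  (∀ p q : ℕ, (hp : p + 2 ≤ n) → (hq : q + 2 ≤ n) → n < p + q + 4 →
      ⁅b ⟨p + 1, by omega⟩, b ⟨q + 1, by omega⟩⁆ = 0)


theorem quotient_is_vergne_and_extension (F : Type*) [Field F] [CharP F 2]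
    (n : ℕ) (hn : 2 ≤ n)
    (G : Type*) [LieRing G] [LieAlgebra F G]
    (bG : Module.Basis (Fin (n + 1)) F G) (c : ℕ → ℕ → F)
    (hbG : VergneRel F (n + 1) G bG c)
    -- g, with the projection π, realizes the quotient G / span(e_{n+1}):
    (g : Type*) [LieRing g] [LieAlgebra F g]
    (π : G →ₗ⁅F⁆ g) (hsurj : Function.Surjective π)
    (hker : ∀ x : G, π x = 0 ↔ x ∈ Submodule.span F {bG (Fin.last n)}) :
    ∃ B : Module.Basis (Fin n) F g,
      (∀ i : Fin n, B i = π (bG i.castSucc)) ∧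
      (∃ c' : ℕ → ℕ → F, VergneRel F n g B c') ∧
      ∃ ω : g →ₗ[F] g →ₗ[F] F,
        (∀ x : g, ω x x = 0) ∧
        (∀ x y z : g, ω ⁅x, y⁆ z + ω ⁅y, z⁆ x + ω ⁅z, x⁆ y = 0) ∧
        (∀ i j : Fin n, (i : ℕ) + (j : ℕ) + 2 ≠ n + 1 → ω (B i) (B j) = 0) ∧
        ω (B ⟨0, by omega⟩) (B ⟨n - 1, by omega⟩) ≠ 0 ∧
        (∀ i j : Fin n,
          (bG.repr ⁅bG i.castSucc, bG j.castSucc⁆) (Fin.last n) = ω (B i) (B j)) := by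
  classical
  -- e_{n+1} = bG (Fin.last n) is central in G
  have hlastb : ∀ j : Fin (n + 1), ⁅bG (Fin.last n), bG j⁆ = 0 := by
    rintro ⟨j, hj⟩
    match j, hj with
    | 0, hj =>
      have h2 : (2 : ℕ) ≤ n + 1 := by omega
      have h := hbG.2.1 h2
      have e1 : (⟨n + 1 - 1, by omega⟩ : Fin (n + 1)) = Fin.last n := by
        apply Fin.ext; simp
      rw [e1] at h
      have e0 : (⟨0, hj⟩ : Fin (n + 1)) = (⟨0, by omega⟩ : Fin (n + 1)) := rfl
      rw [e0, ← lie_skew, h, neg_zero]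
    | q + 1, hj =>
      have h := hbG.2.2.2 (n - 1) q (by omega) (by omega) (by omega)
      have e1 : (⟨n - 1 + 1, by omega⟩ : Fin (n + 1)) = Fin.last n := by
        apply Fin.ext; simp; omega
      rw [e1] at h
      exact h
  have hlast : ∀ z : G, ⁅bG (Fin.last n), z⁆ = 0 := by
    have h0 : LieAlgebra.ad F G (bG (Fin.last n)) = 0 :=
      bG.ext fun j => by simpa [LieAlgebra.ad_apply] using hlastb j
    intro z
    have := LinearMap.congr_fun h0 z
    simpa [LieAlgebra.ad_apply] using this
  have hcent : ∀ k z : G, π k = 0 → ⁅k, z⁆ = 0 := by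
    intro k z hk
    obtain ⟨t, ht⟩ := Submodule.mem_span_singleton.mp ((hker k).mp hk)
    rw [← ht, smul_lie, hlast, smul_zero]
  have hcent' : ∀ k z : G, π k = 0 → ⁅z, k⁆ = 0 := by
    intro k z hk
    rw [← lie_skew, hcent k z hk, neg_zero]
  -- a linear section of π
  obtain ⟨σ, hσ⟩ := (π : G →ₗ[F] g).exists_rightInverse_of_surjective
    (LinearMap.range_eq_top.mpr (by simpa using hsurj))
  have hπσ : ∀ x : g, π (σ x) = x := by
    intro x
    have := LinearMap.congr_fun hσ x
    simpa using this
  have hlift : ∀ a b : G, ⁅σ (π a), σ (π b)⁆ = ⁅a, b⁆ := by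
    intro a b
    have ha : π (σ (π a) - a) = 0 := by rw [map_sub, hπσ, sub_self]
    have hb : π (σ (π b) - b) = 0 := by rw [map_sub, hπσ, sub_self]
    have e1 : ⁅σ (π a), σ (π b)⁆ = ⁅a, σ (π b)⁆ := by
      have h := hcent _ (σ (π b)) ha
      rw [sub_lie, sub_eq_zero] at h
      exact h
    have e2 : ⁅a, σ (π b)⁆ = ⁅a, b⁆ := by
      have h := hcent' _ a hb
      rw [lie_sub, sub_eq_zero] at h
      exact h
    rw [e1, e2]
  -- the basis B of g
  set v : Fin n → g := fun i => π (bG i.castSucc) with hv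
  have hπlast : π (bG (Fin.last n)) = 0 :=
    (hker _).mpr (Submodule.mem_span_singleton_self _)
  have hπsum : ∀ (s : Finset (Fin n)) (w : Fin n → G),
      π (∑ j ∈ s, w j) = ∑ j ∈ s, π (w j) := fun s w => map_sum (π : G →ₗ[F] g) w s
  have hπsum' : ∀ (w : Fin (n + 1) → G),
      π (∑ j : Fin (n + 1), w j) = ∑ j : Fin (n + 1), π (w j) :=
    fun w => map_sum (π : G →ₗ[F] g) w Finset.univ
  have hind : LinearIndependent F v := by
    rw [linearIndependent_iff']
    intro s a h i hi
    have hsum : π (∑ j ∈ s, a j • bG j.castSucc) = 0 := by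
      rw [hπsum]
      simpa [map_smul] using h
    obtain ⟨t, ht⟩ := Submodule.mem_span_singleton.mp ((hker _).mp hsum)
    have h2 := congrArg (fun x => bG.repr x i.castSucc) ht
    simp only [map_smul, map_sum, Module.Basis.repr_self, Finsupp.smul_single,
      Finsupp.smul_apply, Finsupp.coe_finset_sum, Finset.sum_apply,
      Finsupp.single_apply] at h2
    have hne : ¬ (Fin.last n = i.castSucc) := (Fin.castSucc_lt_last i).ne'
    rw [if_neg hne] at h2
    have hsum2 : ∑ j ∈ s, (if j.castSucc = i.castSucc then a j else 0) = a i := by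
      rw [Finset.sum_eq_single_of_mem i hi]
      · simp
      · intro b hb hbne
        rw [if_neg (by simpa [Fin.castSucc_inj] using hbne)]
    simp only [smul_eq_mul, mul_one] at h2
    rw [hsum2] at h2
    exact h2.symm
  have hspan : ⊤ ≤ Submodule.span F (Set.range v) := by
    rintro y -
    obtain ⟨x, rfl⟩ := hsurj y
    have hx : x = ∑ j : Fin (n + 1), bG.repr x j • bG j := (bG.sum_repr x).symm
    rw [hx, hπsum', Fin.sum_univ_castSucc]
    simp only [map_smul, hπlast, smul_zero, add_zero]
    exact Submodule.sum_mem _ fun j _ =>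
      Submodule.smul_mem _ _ (Submodule.subset_span ⟨j, rfl⟩)
  refine ⟨Module.Basis.mk hind hspan, fun i => Module.Basis.mk_apply hind hspan i, ?_, ?_⟩
  · -- Vergne relations in g
    refine ⟨c, ?_, ?_, ?_, ?_⟩
    · intro m h
      have hG := hbG.1 m (by omega)
      simp only [Module.Basis.mk_apply, hv, Fin.castSucc_mk]
      rw [← LieHom.map_lie, hG]
    · intro h
      have hG := hbG.1 (n - 2) (by omega)
      simp only [Module.Basis.mk_apply, hv, Fin.castSucc_mk]
      have e1 : (⟨n - 2 + 1, by omega⟩ : Fin (n + 1)) = ⟨n - 1, by omega⟩ := by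
        apply Fin.ext; simp; omega
      have e2 : (⟨n - 2 + 2, by omega⟩ : Fin (n + 1)) = Fin.last n := by
        apply Fin.ext; simp; omega
      rw [e1, e2] at hG
      rw [← LieHom.map_lie, hG, hπlast]
    · intro p q h
      have hG := hbG.2.2.1 p q (by omega)
      simp only [Module.Basis.mk_apply, hv, Fin.castSucc_mk]
      rw [← LieHom.map_lie, hG, map_smul]
    · intro p q hp hq h
      simp only [Module.Basis.mk_apply, hv, Fin.castSucc_mk]
      rw [← LieHom.map_lie]
      rcases le_or_gt (p + q + 4) (n + 1) with hle | hlt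
      · have hG := hbG.2.2.1 p q hle
        have e2 : (⟨p + q + 3, by omega⟩ : Fin (n + 1)) = Fin.last n := by
          apply Fin.ext; simp; omega
        rw [hG, e2, map_smul, hπlast, smul_zero]
      · rw [hbG.2.2.2 p q (by omega) (by omega) hlt, map_zero]
  · -- the 2-cocycle ω
    set B : Module.Basis (Fin n) F g := Module.Basis.mk hind hspan with hBdef
    have hB : ∀ i : Fin n, B i = π (bG i.castSucc) := fun i => Module.Basis.mk_apply hind hspan i
    set f : G →ₗ[F] F :=
      (Finsupp.lapply (Fin.last n)).comp (bG.repr : G →ₗ[F] (Fin (n + 1) →₀ F)) with hf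
    have hfapp : ∀ w : G, f w = bG.repr w (Fin.last n) := fun w => rfl
    refine ⟨LinearMap.mk₂ F (fun x y => f ⁅σ x, σ y⁆)
      (fun x₁ x₂ y => by simp only [map_add, add_lie])
      (fun t x y => by simp only [map_smul, smul_lie])
      (fun x y₁ y₂ => by simp only [map_add, lie_add])
      (fun t x y => by simp only [map_smul, lie_smul]), ?_, ?_, ?_, ?_, ?_⟩
    · intro x
      simp [LinearMap.mk₂_apply]
    · -- cocycle identity
      have key : ∀ x y : g, ∀ w : G, ⁅σ ⁅x, y⁆, w⁆ = ⁅⁅σ x, σ y⁆, w⁆ := by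
        intro x y w
        have hk : π (σ ⁅x, y⁆ - ⁅σ x, σ y⁆) = 0 := by
          rw [map_sub, hπσ, LieHom.map_lie, hπσ, hπσ, sub_self]
        have h := hcent _ w hk
        rw [sub_lie, sub_eq_zero] at h
        exact h
      have jac : ∀ a b cc : G, ⁅⁅a, b⁆, cc⁆ + ⁅⁅b, cc⁆, a⁆ + ⁅⁅cc, a⁆, b⁆ = 0 := by
        intro a b cc
        have h := lie_jacobi cc a b
        have t1 : ⁅⁅a, b⁆, cc⁆ = -⁅cc, ⁅a, b⁆⁆ := (lie_skew _ _).symm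
        have t2 : ⁅⁅b, cc⁆, a⁆ = -⁅a, ⁅b, cc⁆⁆ := (lie_skew _ _).symm
        have t3 : ⁅⁅cc, a⁆, b⁆ = -⁅b, ⁅cc, a⁆⁆ := (lie_skew _ _).symm
        calc ⁅⁅a, b⁆, cc⁆ + ⁅⁅b, cc⁆, a⁆ + ⁅⁅cc, a⁆, b⁆
            = -(⁅cc, ⁅a, b⁆⁆ + ⁅a, ⁅b, cc⁆⁆ + ⁅b, ⁅cc, a⁆⁆) := by
              rw [t1, t2, t3]; abel
          _ = 0 := by rw [h, neg_zero]
      intro x y z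
      simp only [LinearMap.mk₂_apply]
      rw [key x y (σ z), key y z (σ x), key z x (σ y), ← map_add, ← map_add, jac, map_zero]
    · -- homogeneity
      intro i j hij
      simp only [LinearMap.mk₂_apply]
      rw [hB, hB, hlift, hfapp]
      rcases i with ⟨i, hi⟩
      rcases j with ⟨j, hj⟩
      simp only [Fin.castSucc_mk] at *
      match i, hi, j, hj, hij with
      | 0, hi, 0, hj, hij =>
        simp
      | 0, hi, q + 1, hj, hij =>
        rw [hbG.1 q (by omega)]
        simp only [Module.Basis.repr_self, Finsupp.single_apply]
        rw [if_neg]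
        simp only [Fin.ext_iff, Fin.val_last]
        simp at hij ⊢
        omega
      | p + 1, hi, 0, hj, hij =>
        rw [show ⁅bG ⟨p + 1, by omega⟩, bG ⟨0, by omega⟩⁆
            = -⁅bG ⟨0, by omega⟩, bG ⟨p + 1, by omega⟩⁆ from (lie_skew _ _).symm,
          hbG.1 p (by omega)]
        simp only [map_neg, Finsupp.neg_apply, Module.Basis.repr_self, Finsupp.single_apply]
        rw [if_neg]
        · simp
        simp only [Fin.ext_iff, Fin.val_last]
        simp at hij ⊢
        omega
      | p + 1, hi, q + 1, hj, hij =>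
        rcases le_or_gt (p + q + 4) (n + 1) with hle | hlt
        · rw [hbG.2.2.1 p q hle]
          simp only [map_smul, Finsupp.smul_apply, Module.Basis.repr_self, Finsupp.single_apply]
          rw [if_neg]
          · simp
          simp only [Fin.ext_iff, Fin.val_last]
          simp at hij ⊢
          omega
        · rw [hbG.2.2.2 p q (by omega) (by omega) hlt]
          simp
    · -- nonzero component
      simp only [LinearMap.mk₂_apply, ne_eq]
      rw [hB, hB, hlift, hfapp]
      simp only [Fin.castSucc_mk]
      have hG := hbG.1 (n - 2) (by omega)
      have e1 : (⟨n - 2 + 1, by omega⟩ : Fin (n + 1)) = ⟨n - 1, by omega⟩ := by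
        apply Fin.ext; simp; omega
      have e2 : (⟨n - 2 + 2, by omega⟩ : Fin (n + 1)) = Fin.last n := by
        apply Fin.ext; simp; omega
      rw [e1, e2] at hG
      rw [hG]
      simp
    · intro i j
      simp only [LinearMap.mk₂_apply]
      rw [hB, hB, hlift, hfapp]


end Char2Filiform
end
end

section
/- The Lie algebras m0(5) and m2(5) over F are not isomorphic: m0(5) has an abelian ideal of codimension 1, while m2(5) has no abelian ideal of codimension 1. -/
noncomputable section
namespace Char2Filiform

private lemma lie_expand {F g : Type*} [Field F] [LieRing g] [LieAlgebra F g]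
    (b : Module.Basis (Fin 5) F g) (x y : g) :
    ⁅x, y⁆ = b.repr x 0 • ⁅b 0, y⁆ + b.repr x 1 • ⁅b 1, y⁆ + b.repr x 2 • ⁅b 2, y⁆
      + b.repr x 3 • ⁅b 3, y⁆ + b.repr x 4 • ⁅b 4, y⁆ := by
  conv_lhs => rw [← b.sum_repr x]
  rw [Fin.sum_univ_five]
  simp only [add_lie, smul_lie]

private lemma good_ideal (F : Type*) [Field F]
    (g : Type*) [LieRing g] [LieAlgebra F g] (bg : Module.Basis (Fin 5) F g)
    (hg1 : ∀ m : ℕ, (hm : m + 3 ≤ 5) →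
      ⁅bg ⟨0, by linarith⟩, bg ⟨m + 1, by linarith⟩⁆ = bg ⟨m + 2, by linarith⟩)
    (hg2 : ⁅bg 0, bg 4⁆ = 0)
    (hg3 : ∀ i j : Fin 5, 1 ≤ (i : ℕ) → 1 ≤ (j : ℕ) → ⁅bg i, bg j⁆ = 0) :
    ∃ I : LieIdeal F g,
      (∀ x y : g, x ∈ I → y ∈ I → ⁅x, y⁆ = 0) ∧
      Module.finrank F (g ⧸ (I : LieSubmodule F g g).toSubmodule) = 1 := by
  have hfin : Module.Finite F g := Module.Finite.of_basis bg
  set S : Submodule F g := Submodule.span F (Set.range fun i : Fin 4 => bg i.succ) with hS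
  have hmem : ∀ i : Fin 4, bg i.succ ∈ S := fun i => Submodule.subset_span ⟨i, rfl⟩
  -- brackets into S
  have hbr : ∀ (x : g) (j : Fin 4), ⁅x, bg j.succ⁆ ∈ S := by
    intro x j
    rw [lie_expand bg x (bg j.succ)]
    have hz : ∀ i : Fin 5, 1 ≤ (i : ℕ) → ⁅bg i, bg j.succ⁆ = 0 := fun i hi =>
      hg3 i j.succ hi (by simp [Fin.val_succ])
    rw [hz 1 (by decide), hz 2 (by decide), hz 3 (by decide), hz 4 (by decide)]
    simp only [smul_zero, add_zero]
    have h0 : ⁅bg 0, bg j.succ⁆ ∈ S := by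
      fin_cases j
      · show ⁅bg ⟨0, by omega⟩, bg ⟨0 + 1, by omega⟩⁆ ∈ S
        rw [hg1 0 (by omega)]
        exact hmem 1
      · show ⁅bg ⟨0, by omega⟩, bg ⟨1 + 1, by omega⟩⁆ ∈ S
        rw [hg1 1 (by omega)]
        exact hmem 2
      · show ⁅bg ⟨0, by omega⟩, bg ⟨2 + 1, by omega⟩⁆ ∈ S
        rw [hg1 2 (by omega)]
        exact hmem 3
      · show ⁅bg 0, bg 4⁆ ∈ S
        rw [hg2]
        exact S.zero_mem
    exact S.smul_mem _ h0
  refine ⟨{ toSubmodule := S, lie_mem := ?_ }, ?_, ?_⟩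
  · intro x m hm
    induction hm using Submodule.span_induction with
    | mem y hy => obtain ⟨j, rfl⟩ := hy; exact hbr x j
    | zero => rw [lie_zero]; exact S.zero_mem
    | add y z _ _ hy hz => rw [lie_add]; exact S.add_mem hy hz
    | smul c y _ hy => rw [lie_smul]; exact S.smul_mem c hy
  · intro x y hx hy
    have hx' : x ∈ S := hx
    have hy' : y ∈ S := hy
    clear hx hy
    induction hx' using Submodule.span_induction with
    | mem u hu =>
      obtain ⟨i, rfl⟩ := hu
      induction hy' using Submodule.span_induction with
      | mem w hw =>
        obtain ⟨j, rfl⟩ := hw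
        exact hg3 i.succ j.succ (by simp [Fin.val_succ]) (by simp [Fin.val_succ])
      | zero => exact lie_zero _
      | add u v _ _ h1 h2 => rw [lie_add, h1, h2, add_zero]
      | smul c u _ h1 => rw [lie_smul, h1, smul_zero]
    | zero => exact zero_lie _
    | add u v _ _ h1 h2 => rw [add_lie, h1, h2, add_zero]
    | smul c u _ h1 => rw [smul_lie, h1, smul_zero]
  · have h5 : Module.finrank F g = 5 := by
      rw [Module.finrank_eq_card_basis bg, Fintype.card_fin]
    have hS4 : Module.finrank F S = 4 := by
      rw [hS, finrank_span_eq_card]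
      · simp
      · exact bg.linearIndependent.comp _ (Fin.succ_injective 4)
    have := Submodule.finrank_quotient_add_finrank S
    have hq : Module.finrank F (g ⧸ S) = 1 := by omega
    exact hq


-- no abelian codim-1 ideal in m2(5)
private lemma no_ideal (F : Type*) [Field F]
    (h : Type*) [LieRing h] [LieAlgebra F h] (bh : Module.Basis (Fin 5) F h)
    (hh1 : ∀ m : ℕ, (hm : m + 3 ≤ 5) →
      ⁅bh ⟨0, by linarith⟩, bh ⟨m + 1, by linarith⟩⁆ = bh ⟨m + 2, by linarith⟩)
    (hh3 : ⁅bh 1, bh 2⁆ = bh 4)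
    (hh4 : ∀ i j : Fin 5, 1 ≤ (i : ℕ) → 1 ≤ (j : ℕ) →
      ¬((i = 1 ∧ j = 2) ∨ (i = 2 ∧ j = 1)) → ⁅bh i, bh j⁆ = 0) :
    ¬ ∃ I : LieIdeal F h,
      (∀ x y : h, x ∈ I → y ∈ I → ⁅x, y⁆ = 0) ∧
      Module.finrank F (h ⧸ (I : LieSubmodule F h h).toSubmodule) = 1 := by
  rintro ⟨I, habel, hcodim⟩
  have hfin : Module.Finite F h := Module.Finite.of_basis bh
  have h5 : Module.finrank F h = 5 := by
    rw [Module.finrank_eq_card_basis bh, Fintype.card_fin]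
  set p : Submodule F h := (I : LieSubmodule F h h).toSubmodule with hp
  have hI4 : Module.finrank F p = 4 := by
    have := Submodule.finrank_quotient_add_finrank p
    omega
  -- derived algebra is inside I
  have hder : ∀ x y : h, ⁅x, y⁆ ∈ p := by
    intro x y
    obtain ⟨z, -, hz⟩ := (finrank_eq_one_iff' (K := F)).mp hcodim
    obtain ⟨w, hw⟩ := Submodule.Quotient.mk_surjective p z
    obtain ⟨c, hc⟩ := hz (Submodule.Quotient.mk x)
    obtain ⟨d, hd⟩ := hz (Submodule.Quotient.mk y)
    have hx : x - c • w ∈ p := by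
      rw [← Submodule.Quotient.mk_eq_zero, Submodule.Quotient.mk_sub,
        Submodule.Quotient.mk_smul, hw, hc, sub_self]
    have hy : y - d • w ∈ p := by
      rw [← Submodule.Quotient.mk_eq_zero, Submodule.Quotient.mk_sub,
        Submodule.Quotient.mk_smul, hw, hd, sub_self]
    have hxe : x = (x - c • w) + c • w := by abel
    have hye : y = (y - d • w) + d • w := by abel
    rw [hxe, hye, lie_add, add_lie, add_lie]
    have m1 : ⁅x - c • w, y - d • w⁆ ∈ p := I.lie_mem hy
    have m2 : ⁅c • w, y - d • w⁆ ∈ p := I.lie_mem hy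
    have m3 : ⁅x - c • w, d • w⁆ ∈ p := by
      rw [← lie_skew]
      exact p.neg_mem (I.lie_mem hx)
    have m4 : ⁅c • w, d • w⁆ ∈ p := by
      rw [smul_lie, lie_smul, lie_self, smul_zero, smul_zero]
      exact p.zero_mem
    exact p.add_mem (p.add_mem m1 m2) (p.add_mem m3 m4)
  have e2 : bh 2 ∈ p := by
    have := hh1 0 (by omega)
    rw [show ((⟨0, by omega⟩ : Fin 5)) = 0 from rfl, show ((⟨1, by omega⟩ : Fin 5)) = 1 from rfl,
      show ((⟨2, by omega⟩ : Fin 5)) = 2 from rfl] at this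
    rw [← this]; exact hder _ _
  -- the span of bh 2, bh 3, bh 4
  set S : Submodule F h := Submodule.span F (Set.range fun i : Fin 3 => bh ⟨(i : ℕ) + 2, by omega⟩)
    with hS
  have hS3 : Module.finrank F S = 3 := by
    rw [finrank_span_eq_card]
    · simp
    · have : (fun i : Fin 3 => bh ⟨(i : ℕ) + 2, by omega⟩)
          = bh ∘ (fun i : Fin 3 => (⟨(i : ℕ) + 2, by omega⟩ : Fin 5)) := rfl
      rw [this]
      exact bh.linearIndependent.comp _ (by intro a b hab; simpa [Fin.ext_iff] using hab)
  have hnle : ¬ p ≤ S := by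
    intro hle
    have := Submodule.finrank_mono hle
    omega
  obtain ⟨v, hvI, hvS⟩ := SetLike.not_le_iff_exists.mp hnle
  -- compute ⁅v, bh 2⁆
  have hbr : ⁅v, bh 2⁆ = bh.repr v 0 • bh 3 + bh.repr v 1 • bh 4 := by
    rw [lie_expand bh v (bh 2)]
    have b0 : ⁅bh 0, bh 2⁆ = bh 3 := by
      have := hh1 1 (by omega)
      rwa [show ((⟨0, by omega⟩ : Fin 5)) = 0 from rfl, show ((⟨2, by omega⟩ : Fin 5)) = 2 from rfl,
        show ((⟨3, by omega⟩ : Fin 5)) = 3 from rfl] at this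
    rw [b0, hh3, hh4 2 2 (by decide) (by decide) (by decide),
      hh4 3 2 (by decide) (by decide) (by decide),
      hh4 4 2 (by decide) (by decide) (by decide)]
    simp
  have hzero : bh.repr v 0 • bh 3 + bh.repr v 1 • bh 4 = 0 := by
    rw [← hbr]; exact habel v (bh 2) hvI e2
  have c0 : bh.repr v 0 = 0 := by
    have := congrArg (fun w => bh.repr w 3) hzero
    simpa [Finsupp.single_apply] using this
  have c1 : bh.repr v 1 = 0 := by
    have := congrArg (fun w => bh.repr w 4) hzero
    simpa [Finsupp.single_apply] using this
  apply hvS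
  have hmem : ∀ i : Fin 3, bh ⟨(i : ℕ) + 2, by omega⟩ ∈ S :=
    fun i => Submodule.subset_span ⟨i, rfl⟩
  have hv : v = bh.repr v 2 • bh 2 + bh.repr v 3 • bh 3 + bh.repr v 4 • bh 4 := by
    conv_lhs => rw [← bh.sum_repr v]
    rw [Fin.sum_univ_five, c0, c1, zero_smul, zero_smul, zero_add, zero_add]
  rw [hv]
  exact S.add_mem (S.add_mem (S.smul_mem _ (hmem 0)) (S.smul_mem _ (hmem 1)))
    (S.smul_mem _ (hmem 2))


theorem m0_5_not_iso_m2_5 (F : Type*) [Field F] [CharP F 2]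
    (g h : Type*) [LieRing g] [LieAlgebra F g] [LieRing h] [LieAlgebra F h]
    (bg : Module.Basis (Fin 5) F g) (bh : Module.Basis (Fin 5) F h)
    -- g is m0(5):
    (hg1 : ∀ m : ℕ, (hm : m + 3 ≤ 5) →
      ⁅bg ⟨0, by omega⟩, bg ⟨m + 1, by omega⟩⁆ = bg ⟨m + 2, by omega⟩)
    (hg2 : ⁅bg 0, bg 4⁆ = 0)
    (hg3 : ∀ i j : Fin 5, 1 ≤ (i : ℕ) → 1 ≤ (j : ℕ) → ⁅bg i, bg j⁆ = 0)
    -- h is m2(5):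
    (hh1 : ∀ m : ℕ, (hm : m + 3 ≤ 5) →
      ⁅bh ⟨0, by omega⟩, bh ⟨m + 1, by omega⟩⁆ = bh ⟨m + 2, by omega⟩)
    (hh2 : ⁅bh 0, bh 4⁆ = 0)
    (hh3 : ⁅bh 1, bh 2⁆ = bh 4)
    (hh4 : ∀ i j : Fin 5, 1 ≤ (i : ℕ) → 1 ≤ (j : ℕ) →
      ¬((i = 1 ∧ j = 2) ∨ (i = 2 ∧ j = 1)) → ⁅bh i, bh j⁆ = 0) :
    (¬ Nonempty (g ≃ₗ⁅F⁆ h)) ∧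
    (∃ I : LieIdeal F g,
      (∀ x y : g, x ∈ I → y ∈ I → ⁅x, y⁆ = 0) ∧
      Module.finrank F (g ⧸ (I : LieSubmodule F g g).toSubmodule) = 1) ∧
    (¬ ∃ I : LieIdeal F h,
      (∀ x y : h, x ∈ I → y ∈ I → ⁅x, y⁆ = 0) ∧
      Module.finrank F (h ⧸ (I : LieSubmodule F h h).toSubmodule) = 1) := by
  have P2 := good_ideal F g bg hg1 hg2 hg3
  have P3 := no_ideal F h bh hh1 hh3 hh4
  refine ⟨?_, P2, P3⟩
  rintro ⟨e⟩
  obtain ⟨I, habel, hcodim⟩ := P2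
  apply P3
  refine ⟨LieIdeal.comap e.symm.toLieHom I, ?_, ?_⟩
  · intro x y hx hy
    rw [LieIdeal.mem_comap] at hx hy
    have h0 : e.symm.toLieHom ⁅x, y⁆ = 0 := by
      rw [LieHom.map_lie, habel _ _ hx hy]
    have h0' : e.symm ⁅x, y⁆ = 0 := h0
    have h1 := congrArg e h0'
    rw [LieEquiv.apply_symm_apply] at h1
    rwa [show e 0 = 0 from e.toLieHom.map_zero] at h1
  · have hmap : (LieSubmodule.toSubmodule (I : LieSubmodule F g g)).map
        (e.toLinearEquiv : g →ₗ[F] h)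
        = LieSubmodule.toSubmodule
          ((LieIdeal.comap e.symm.toLieHom I : LieIdeal F h) : LieSubmodule F h h) := by
      ext x
      rw [Submodule.mem_map_equiv]
      change e.toLinearEquiv.symm x ∈ I ↔ x ∈ LieIdeal.comap e.symm.toLieHom I
      rw [LieIdeal.mem_comap]
      exact Iff.rfl
    have equiv := Submodule.Quotient.equiv _ _ e.toLinearEquiv hmap
    rw [← hcodim]
    exact (LinearEquiv.finrank_eq equiv).symm

end Char2Filiform
end
end
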